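/- Let A be a totally unimodular m×n integer matrix and b ∈ ℤᵐ. If the system A x ≥ b has a solution x ∈ ℝⁿ, then it has a solution x ∈ ℤⁿ. -/

import Mathlib

/-- A matrix is totally unimodular if every square submatrix
(obtained by selecting rows and columns injectively) has determinant
`1`, `0` or `-1`. -/
def IsTotUnimod {X Y : Type*} (A : Matrix X Y ℤ) : Prop :=
  ∀ (k : ℕ) (f : Fin k → X) (g : Fin k → Y),
    Function.Injective f → Function.Injective g →
      (A.submatrix f g).det = 1 ∨ (A.submatrix f g).det = 0 ∨
        (A.submatrix f g).det = -1

/-- Integrality of totally unimodular systems: if `A` is totally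
unimodular, `b` integral, and `A x ≥ b` has a real solution, then it
has an integer solution. -/
lemma tu_entry {X Y : Type*} {A : Matrix X Y ℤ} (hA : IsTotUnimod A) (i : X) (j : Y) :
    A i j = 1 ∨ A i j = 0 ∨ A i j = -1 := by
  have := hA 1 (fun _ => i) (fun _ => j)
    (fun a b _ => Subsingleton.elim a b) (fun a b _ => Subsingleton.elim a b)
  simpa [Matrix.det_fin_one] using this

lemma tu_pivot {X : Type*} {n : ℕ} {A : Matrix X (Fin (n+1)) ℤ} (hA : IsTotUnimod A)
    (i : X) (j : Fin (n+1)) (hε : A i j * A i j = 1) :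
    IsTotUnimod (Matrix.of fun k c => A k (j.succAbove c) - A k j * A i j * A i (j.succAbove c)) := by
  set B : Matrix X (Fin n) ℤ :=
    Matrix.of fun k c => A k (j.succAbove c) - A k j * A i j * A i (j.succAbove c) with hB
  intro k f g hf hg
  by_cases hi : ∃ p, f p = i
  · obtain ⟨p, hp⟩ := hi
    right; left
    apply Matrix.det_eq_zero_of_row_eq_zero p
    intro q
    simp only [Matrix.submatrix_apply, hB, Matrix.of_apply, hp]
    linear_combination (-(A i (j.succAbove (g q)))) * hε
  · push_neg at hi
    set F : Fin 1 ⊕ Fin k → X := Sum.elim (fun _ => i) f with hF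
    set G : Fin 1 ⊕ Fin k → Fin (n+1) := Sum.elim (fun _ => j) (fun q => j.succAbove (g q)) with hG
    have hFinj : Function.Injective F := by
      intro a b hab
      cases a <;> cases b <;>
        simp only [hF, Sum.elim_inl, Sum.elim_inr] at hab
      · exact congrArg Sum.inl (Subsingleton.elim _ _)
      · exact absurd hab.symm (hi _)
      · exact absurd hab (hi _)
      · exact congrArg Sum.inr (hf hab)
    have hGinj : Function.Injective G := by
      intro a b hab
      cases a <;> cases b <;>
        simp only [hG, Sum.elim_inl, Sum.elim_inr] at hab
      · exact congrArg Sum.inl (Subsingleton.elim _ _)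
      · exact absurd hab.symm (Fin.succAbove_ne j _)
      · exact absurd hab (Fin.succAbove_ne j _)
      · exact congrArg Sum.inr (hg (Fin.succAbove_right_injective hab))
    set P : Matrix (Fin 1 ⊕ Fin k) (Fin 1 ⊕ Fin k) ℤ := A.submatrix F G with hP
    have key := hA (1 + k) (F ∘ finSumFinEquiv.symm) (G ∘ finSumFinEquiv.symm)
      (hFinj.comp finSumFinEquiv.symm.injective) (hGinj.comp finSumFinEquiv.symm.injective)
    have hdet : (A.submatrix (F ∘ finSumFinEquiv.symm) (G ∘ finSumFinEquiv.symm)).det = P.det := by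
      have : A.submatrix (F ∘ finSumFinEquiv.symm) (G ∘ finSumFinEquiv.symm)
          = P.submatrix finSumFinEquiv.symm finSumFinEquiv.symm := rfl
      rw [this, Matrix.det_submatrix_equiv_self]
    rw [hdet] at key
    letI : Invertible P.toBlocks₁₁ := by
      refine ⟨P.toBlocks₁₁, ?_, ?_⟩ <;>
      · ext p q
        simp only [Matrix.mul_apply, Fin.sum_univ_one, Matrix.toBlocks₁₁, hP,
          Matrix.submatrix_apply, Matrix.of_apply, hF, hG, Sum.elim_inl]
        rw [hε]
        simp [Matrix.one_apply, Subsingleton.elim p q]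
    have hPdet : P.det = A i j * (B.submatrix f g).det := by
      have hPb : P = Matrix.fromBlocks P.toBlocks₁₁ P.toBlocks₁₂ P.toBlocks₂₁ P.toBlocks₂₂ :=
        (Matrix.fromBlocks_toBlocks P).symm
      rw [hPb, Matrix.det_fromBlocks₁₁]
      congr 1
      · simp [Matrix.det_fin_one, Matrix.toBlocks₁₁, hP, hF, hG]
      · congr 1
        have hinv : (⅟P.toBlocks₁₁ : Matrix (Fin 1) (Fin 1) ℤ) = P.toBlocks₁₁ := rfl
        rw [hinv]
        ext p q
        simp [Matrix.toBlocks₁₁, Matrix.toBlocks₁₂, Matrix.toBlocks₂₁, Matrix.toBlocks₂₂,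
          Matrix.mul_apply, Fin.sum_univ_one, hP, hF, hG, hB, mul_assoc]
    have hfin : (B.submatrix f g).det = A i j * P.det := by
      rw [hPdet, ← mul_assoc, hε, one_mul]
    rcases mul_self_eq_one_iff.mp hε with h1 | h1 <;>
      rcases key with h | h | h <;> rw [hfin, h1, h] <;> norm_num

lemma eq_lemma : ∀ (n : ℕ) {X : Type} (A : Matrix X (Fin n) ℤ) (b : X → ℤ),
    IsTotUnimod A →
    (∃ x : Fin n → ℝ, ∀ i, (A.map (Int.cast : ℤ → ℝ)).mulVec x i = (b i : ℝ)) →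
    ∃ x : Fin n → ℤ, ∀ i, A.mulVec x i = b i := by
  intro n
  induction n with
  | zero =>
    intro X A b _ ⟨x, hx⟩
    refine ⟨0, fun i => ?_⟩
    have h1 : (A.map (Int.cast : ℤ → ℝ)).mulVec x i = 0 := by
      simp [Matrix.mulVec, dotProduct]
    have h2 : (b i : ℝ) = 0 := by rw [← hx i, h1]
    have h3 : b i = 0 := by exact_mod_cast h2
    simp [Matrix.mulVec, dotProduct, h3]
  | succ n ih =>
    intro X A b hA ⟨x, hx⟩
    by_cases hzero : ∀ k c, A k c = 0
    · refine ⟨0, fun i => ?_⟩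
      have h2 : (b i : ℝ) = 0 := by
        rw [← hx i]; simp [Matrix.mulVec, dotProduct, hzero]
      have h3 : b i = 0 := by exact_mod_cast h2
      simp [Matrix.mulVec, dotProduct, hzero, h3]
    · push_neg at hzero
      obtain ⟨i, j, hij⟩ := hzero
      have hε : A i j * A i j = 1 := by
        rcases tu_entry hA i j with h | h | h
        · rw [h]; norm_num
        · exact absurd h hij
        · rw [h]; norm_num
      set B : Matrix X (Fin n) ℤ :=
        Matrix.of fun k c => A k (j.succAbove c) - A k j * A i j * A i (j.succAbove c) with hB
      set b' : X → ℤ := fun k => b k - A k j * A i j * b i with hb'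
      -- real solution for B
      have hxk : ∀ k : X, (A k j : ℝ) * x j
          + ∑ c : Fin n, (A k (j.succAbove c) : ℝ) * x (j.succAbove c) = (b k : ℝ) := by
        intro k
        rw [← hx k]
        simp only [Matrix.mulVec, dotProduct, Matrix.map_apply]
        rw [Fin.sum_univ_succAbove (fun t => (A k t : ℝ) * x t) j]
      have hreal : ∃ y : Fin n → ℝ,
          ∀ k, (B.map (Int.cast : ℤ → ℝ)).mulVec y k = ((b' k : ℤ) : ℝ) := by
        refine ⟨fun c => x (j.succAbove c), fun k => ?_⟩
        simp only [Matrix.mulVec, dotProduct, Matrix.map_apply, hB, Matrix.of_apply, hb']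
        push_cast
        have e1 := hxk k
        have e2 := hxk i
        have expand : ∀ c : Fin n,
            ((A k (j.succAbove c) : ℝ) - (A k j : ℝ) * (A i j : ℝ) * (A i (j.succAbove c) : ℝ))
              * x (j.succAbove c)
            = (A k (j.succAbove c) : ℝ) * x (j.succAbove c)
              - (A k j : ℝ) * (A i j : ℝ) * ((A i (j.succAbove c) : ℝ) * x (j.succAbove c)) := by
          intro c; ring
        rw [Finset.sum_congr rfl (fun c _ => expand c), Finset.sum_sub_distrib,
          ← Finset.mul_sum]
        have hεr : (A i j : ℝ) * (A i j : ℝ) = 1 := by exact_mod_cast hε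
        linear_combination e1 - ((A k j : ℝ) * (A i j : ℝ)) * e2 + ((A k j : ℝ) * x j) * hεr
      obtain ⟨y, hy⟩ := ih B b' (tu_pivot hA i j hε) hreal
      -- build integer solution for A
      set Si : ℤ := ∑ c : Fin n, A i (j.succAbove c) * y c with hSi
      set xj : ℤ := A i j * (b i - Si) with hxj
      set xhat : Fin (n+1) → ℤ := j.insertNth xj y with hxhat
      refine ⟨xhat, fun k => ?_⟩
      have hsum : A.mulVec xhat k
          = A k j * xj + ∑ c : Fin n, A k (j.succAbove c) * y c := by
        simp only [Matrix.mulVec, dotProduct]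
        rw [Fin.sum_univ_succAbove (fun t => A k t * xhat t) j]
        simp [hxhat, Fin.insertNth_apply_same, Fin.insertNth_apply_succAbove]
      have hbk := hy k
      simp only [Matrix.mulVec, dotProduct, hB, Matrix.of_apply, hb'] at hbk
      have expand : ∀ c : Fin n,
          (A k (j.succAbove c) - A k j * A i j * A i (j.succAbove c)) * y c
          = A k (j.succAbove c) * y c - A k j * A i j * (A i (j.succAbove c) * y c) := by
        intro c; ring
      rw [Finset.sum_congr rfl (fun c _ => expand c), Finset.sum_sub_distrib,
        ← Finset.mul_sum, ← hSi] at hbk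
      rw [hsum, hxj]
      linear_combination hbk

theorem stmt6 {m n : ℕ} (A : Matrix (Fin m) (Fin n) ℤ) (b : Fin m → ℤ)
    (hA : IsTotUnimod A)
    (hfeas : ∃ x : Fin n → ℝ,
      ∀ i, (b i : ℝ) ≤ (A.map (Int.cast : ℤ → ℝ)).mulVec x i) :
    ∃ x : Fin n → ℤ, ∀ i, b i ≤ A.mulVec x i := by
  classical
  obtain ⟨x0, hx0⟩ := hfeas
  set Ar : Matrix (Fin m) (Fin n) ℝ := A.map (Int.cast : ℤ → ℝ) with hAr
  set Feas : (Fin n → ℝ) → Prop := fun x => ∀ i, (b i : ℝ) ≤ Ar.mulVec x i with hFeas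
  set T : (Fin n → ℝ) → Finset (Fin m) :=
    fun x => Finset.univ.filter (fun i => Ar.mulVec x i = (b i : ℝ)) with hT
  have memT : ∀ (x : Fin n → ℝ) (jj : Fin m),
      jj ∈ T x ↔ Ar.mulVec x jj = (b jj : ℝ) := by
    intro x jj
    rw [hT]
    simp
  set S : Set ℕ := {k | ∃ x, Feas x ∧ (T x).card = k} with hS
  have hSne : S.Nonempty := ⟨(T x0).card, x0, hx0, rfl⟩
  have hSbdd : BddAbove S := by
    refine ⟨m, ?_⟩
    rintro k ⟨x, -, rfl⟩
    exact le_trans (Finset.card_le_univ _) (by simp)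
  obtain ⟨xs, hxsF, hxscard⟩ := Nat.sSup_mem hSne hSbdd
  set K := sSup S with hK
  have hmax : ∀ x, Feas x → (T x).card ≤ K := fun x hx => le_csSup hSbdd ⟨x, hx, rfl⟩
  -- restricted (tight) system
  set A' : Matrix (T xs) (Fin n) ℤ := fun s c => A s.1 c with hA'
  have hA'tu : IsTotUnimod A' := by
    intro k f g hf hg
    exact hA k (fun p => (f p).1) g
      (fun a b hab => hf (Subtype.ext hab)) hg
  have hreal : ∃ x : Fin n → ℝ,
      ∀ s : (T xs), (A'.map (Int.cast : ℤ → ℝ)).mulVec x s = ((b s.1 : ℤ) : ℝ) :=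
    ⟨xs, fun s => (memT xs s.1).mp s.2⟩
  obtain ⟨xz, hxz⟩ := eq_lemma n A' (fun s => b s.1) hA'tu hreal
  have htight : ∀ i ∈ T xs, A.mulVec xz i = b i := fun i hi => hxz ⟨i, hi⟩
  refine ⟨xz, fun i => ?_⟩
  by_contra hlt
  push_neg at hlt
  set z : Fin n → ℝ := fun c => ((xz c : ℤ) : ℝ) with hzdef
  set d : Fin m → ℝ := fun jj => Ar.mulVec z jj with hd
  set cc : Fin m → ℝ := fun jj => Ar.mulVec xs jj with hcc
  have hz : ∀ jj, d jj = ((A.mulVec xz jj : ℤ) : ℝ) := fun jj =>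
    ((Int.castRingHom ℝ).map_mulVec A xz jj).symm
  set S' : Finset (Fin m) := Finset.univ.filter (fun jj => d jj < (b jj : ℝ)) with hS'
  have memS' : ∀ jj, jj ∈ S' ↔ d jj < (b jj : ℝ) := by
    intro jj
    rw [hS']
    simp
  have hiS' : i ∈ S' := by
    rw [memS', hz i]
    exact_mod_cast hlt
  have hS'ne : S'.Nonempty := ⟨i, hiS'⟩
  have hdb : ∀ jj ∈ S', d jj < (b jj : ℝ) := fun jj hjj => (memS' jj).mp hjj
  have hnotT : ∀ jj ∈ S', jj ∉ T xs := by
    intro jj hjj hTj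
    have h1 : d jj = (b jj : ℝ) := by rw [hz jj, htight jj hTj]
    exact absurd h1 (ne_of_lt (hdb jj hjj))
  have hclt : ∀ jj ∈ S', (b jj : ℝ) < cc jj := by
    intro jj hjj
    refine lt_of_le_of_ne (hxsF jj) fun h => hnotT jj hjj ((memT xs jj).mpr h.symm)
  set τ : Fin m → ℝ := fun jj => (cc jj - (b jj : ℝ)) / (cc jj - d jj) with hτ
  set t := S'.inf' hS'ne τ with htdef
  obtain ⟨j0, hj0S, hj0⟩ := Finset.exists_mem_eq_inf' hS'ne τ
  have hden : ∀ jj ∈ S', 0 < cc jj - d jj := by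
    intro jj hjj
    have := hdb jj hjj; have := hclt jj hjj; linarith
  have hτval : ∀ jj, τ jj = (cc jj - (b jj : ℝ)) / (cc jj - d jj) := fun jj => rfl
  have hτpos : ∀ jj ∈ S', 0 < τ jj := by
    intro jj hjj
    rw [hτval]
    exact div_pos (by have := hclt jj hjj; linarith) (hden jj hjj)
  have hτlt1 : ∀ jj ∈ S', τ jj < 1 := by
    intro jj hjj
    rw [hτval, div_lt_one (hden jj hjj)]
    have := hdb jj hjj; linarith
  have ht_le : ∀ jj ∈ S', t ≤ τ jj := fun jj hjj => Finset.inf'_le τ hjj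
  have ht_pos : 0 < t := by rw [htdef, hj0]; exact hτpos j0 hj0S
  have ht_lt1 : t < 1 := by rw [htdef, hj0]; exact hτlt1 j0 hj0S
  set w : Fin n → ℝ := fun c => xs c + t * (z c - xs c) with hw
  have hwmv : ∀ jj, Ar.mulVec w jj = cc jj + t * (d jj - cc jj) := by
    intro jj
    have hweq : w = xs + t • (z - xs) := by
      funext c
      rw [hw]
      simp [smul_eq_mul]
    rw [hweq, Matrix.mulVec_add, Matrix.mulVec_smul, Matrix.mulVec_sub]
    have h1 : cc jj = Ar.mulVec xs jj := rfl
    have h2 : d jj = Ar.mulVec z jj := rfl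
    rw [h1, h2]
    simp only [Pi.add_apply, Pi.smul_apply, Pi.sub_apply, smul_eq_mul]
    try ring
  -- feasibility of w
  have hwF : Feas w := by
    intro jj
    rw [hwmv jj]
    by_cases hjT : jj ∈ T xs
    · have hceq : cc jj = (b jj : ℝ) := (memT xs jj).mp hjT
      have hdeq : d jj = (b jj : ℝ) := by rw [hz jj, htight jj hjT]
      rw [hceq, hdeq]
      simp
    · by_cases hjS : jj ∈ S'
      · have h1 := ht_le jj hjS
        have h2 := hden jj hjS
        have h3 : t * (cc jj - d jj) ≤ τ jj * (cc jj - d jj) :=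
          mul_le_mul_of_nonneg_right h1 (le_of_lt h2)
        rw [hτval, div_mul_cancel₀ _ (ne_of_gt h2)] at h3
        nlinarith
      · have hdg : (b jj : ℝ) ≤ d jj := by
          by_contra hcon
          push_neg at hcon
          exact hjS ((memS' jj).mpr hcon)
        have hcg : (b jj : ℝ) ≤ cc jj := hxsF jj
        nlinarith
  -- tight set grows
  have hsub : insert j0 (T xs) ⊆ T w := by
    intro jj hjj
    rw [Finset.mem_insert] at hjj
    rw [memT]
    rcases hjj with rfl | hjT
    · rw [hwmv jj, htdef, hj0, hτval]
      have h2 := hden jj hj0S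
      field_simp
      ring
    · have hceq : cc jj = (b jj : ℝ) := (memT xs jj).mp hjT
      have hdeq : d jj = (b jj : ℝ) := by rw [hz jj, htight jj hjT]
      rw [hwmv jj, hceq, hdeq]
      simp
  have hcard : K + 1 ≤ (T w).card := by
    calc K + 1 = (T xs).card + 1 := by rw [hxscard]
    _ = (insert j0 (T xs)).card := (Finset.card_insert_of_notMem (hnotT j0 hj0S)).symm
    _ ≤ (T w).card := Finset.card_le_card hsub
  have := hmax w hwF
  omega
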